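/- Let X be a Banach space and Y ⊆ X a closed subspace such that Y is a Grothendieck space and X/Y has property (K). Then X has property (K). -/

import Mathlib

open NormedSpace Filter

/-- A set is weakly compact if it is compact in the weak topology. -/
def IsWeaklyCompact {X : Type*} [NormedAddCommGroup X] [NormedSpace ℝ X] (L : Set X) : Prop :=
  IsCompact (toWeakSpace ℝ X '' L)

/-- Weak* convergence of a sequence of functionals. -/
def WStarTendsto {X : Type*} [NormedAddCommGroup X] [NormedSpace ℝ X]
    (f : ℕ → StrongDual ℝ X) (g : StrongDual ℝ X) : Prop :=
  ∀ x : X, Tendsto (fun n => f n x) atTop (nhds (g x))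

/-- Convergence in the Mackey topology μ(X*,X): uniform convergence on every
weakly compact subset of X. -/
def MackeyTendsto {X : Type*} [NormedAddCommGroup X] [NormedSpace ℝ X]
    (f : ℕ → StrongDual ℝ X) (g : StrongDual ℝ X) : Prop :=
  ∀ L : Set X, IsWeaklyCompact L → ∀ ε : ℝ, 0 < ε →
    ∀ᶠ n in atTop, ∀ x ∈ L, |f n x - g x| < ε

/-- `y` is a convex block subsequence of `x`. -/
def IsConvexBlock {E : Type*} [AddCommGroup E] [Module ℝ E] (x y : ℕ → E) : Prop :=
  ∃ (I : ℕ → Finset ℕ) (a : ℕ → ℝ),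
    (∀ k, (I k).Nonempty) ∧
    (∀ k m m', m ∈ I k → m' ∈ I (k + 1) → m < m') ∧
    (∀ n, 0 ≤ a n) ∧
    (∀ k, ∑ n ∈ I k, a n = 1) ∧
    (∀ k, y k = ∑ n ∈ I k, a n • x n)

/-- Property (K): every weak*-convergent sequence in the dual admits a convex block
subsequence converging in the Mackey topology. -/
def PropertyK (X : Type*) [NormedAddCommGroup X] [NormedSpace ℝ X] : Prop :=
  ∀ (f : ℕ → StrongDual ℝ X) (g : StrongDual ℝ X), WStarTendsto f g →
    ∃ (y : ℕ → StrongDual ℝ X) (h : StrongDual ℝ X), IsConvexBlock f y ∧ MackeyTendsto y h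

/-- A Banach space is Grothendieck if every weak*-convergent sequence in the dual
is weakly convergent. -/
def GrothendieckSpace (Y : Type*) [NormedAddCommGroup Y] [NormedSpace ℝ Y] : Prop :=
  ∀ (f : ℕ → StrongDual ℝ Y) (g : StrongDual ℝ Y), WStarTendsto f g →
    ∀ F : StrongDual ℝ (StrongDual ℝ Y), Tendsto (fun n => F (f n)) atTop (nhds (F g))

/-! ### Auxiliary material -/

section Aux

variable {X : Type*} [NormedAddCommGroup X] [NormedSpace ℝ X] (Y : Submodule ℝ X)

/-- The quotient map as a continuous linear map. -/
noncomputable def qC : X →L[ℝ] X ⧸ Y :=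
  Y.mkQ.mkContinuous 1 (fun x => by simpa using Submodule.Quotient.norm_mk_le Y x)

/-- Lift a functional vanishing on `Y` to the quotient. -/
noncomputable def liftD (e : StrongDual ℝ X) (h : Y ≤ LinearMap.ker (e : X →ₗ[ℝ] ℝ)) :
    StrongDual ℝ (X ⧸ Y) :=
  (Y.liftQ (e : X →ₗ[ℝ] ℝ) h).mkContinuous ‖e‖ (by
    intro z
    refine le_of_forall_pos_le_add (fun ε hε => ?_)
    have hd : 0 < ε / (‖e‖ + 1) := by positivity
    obtain ⟨m, hm, hlt⟩ := Submodule.Quotient.norm_mk_lt z hd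
    have h1 : Y.liftQ (e : X →ₗ[ℝ] ℝ) h z = e m := by rw [← hm]; rfl
    have h2 : ‖e m‖ ≤ ‖e‖ * ‖m‖ := e.le_opNorm m
    have h3 : ‖e‖ * ‖m‖ ≤ ‖e‖ * (‖z‖ + ε / (‖e‖ + 1)) :=
      mul_le_mul_of_nonneg_left hlt.le (norm_nonneg e)
    have h4 : ‖e‖ * (ε / (‖e‖ + 1)) ≤ ε := by
      rw [mul_div_assoc']
      rw [div_le_iff₀ (by positivity)]
      nlinarith [norm_nonneg e]
    rw [h1]
    nlinarith [norm_nonneg e])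

theorem liftD_apply (e : StrongDual ℝ X) (h : Y ≤ LinearMap.ker (e : X →ₗ[ℝ] ℝ)) (x : X) :
    liftD Y e h (qC Y x) = e x := rfl

theorem isWeaklyCompact_bounded [CompleteSpace X] {L : Set X} (hL : IsWeaklyCompact L) :
    ∃ M : ℝ, ∀ x ∈ L, ‖x‖ ≤ M := by
  rcases L.eq_empty_or_nonempty with rfl | ⟨x0, hx0⟩
  · exact ⟨0, by simp⟩
  have hbd : ∀ φ : StrongDual ℝ X, ∃ C, ∀ x : L, ‖(inclusionInDoubleDual ℝ X (x : X)) φ‖ ≤ C := by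
    intro φ
    have hφc : Continuous fun z : WeakSpace ℝ X => φ z := WeakBilin.eval_continuous _ φ
    obtain ⟨C, hC⟩ := (Metric.isBounded_iff_subset_closedBall 0).1 (hL.image hφc).isBounded
    refine ⟨C, fun ⟨x, hx⟩ => ?_⟩
    have : φ (toWeakSpace ℝ X x) ∈ Metric.closedBall (0:ℝ) C :=
      hC ⟨toWeakSpace ℝ X x, Set.mem_image_of_mem _ hx, rfl⟩
    simp only [Metric.mem_closedBall, Real.dist_eq, sub_zero] at this
    simp only [Real.norm_eq_abs]
    exact this
  obtain ⟨C', hC'⟩ := banach_steinhaus (g := fun x : L => inclusionInDoubleDual ℝ X (x : X)) hbd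
  refine ⟨C', fun x hx => ?_⟩
  have := hC' ⟨x, hx⟩
  rwa [← (inclusionInDoubleDualLi ℝ (E := X)).norm_map x]

theorem isWeaklyCompact_image {Z : Type*} [NormedAddCommGroup Z] [NormedSpace ℝ Z]
    (f : X →L[ℝ] Z) {L : Set X} (hL : IsWeaklyCompact L) : IsWeaklyCompact (f '' L) := by
  have hc : Continuous (WeakSpace.map f : WeakSpace ℝ X → WeakSpace ℝ Z) :=
    (WeakSpace.map f).continuous
  have him : toWeakSpace ℝ Z '' (f '' L) = (WeakSpace.map f) '' (toWeakSpace ℝ X '' L) := by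
    ext z
    simp only [Set.mem_image]
    constructor
    · rintro ⟨_, ⟨x, hx, rfl⟩, rfl⟩
      exact ⟨toWeakSpace ℝ X x, ⟨x, hx, rfl⟩, rfl⟩
    · rintro ⟨_, ⟨x, hx, rfl⟩, rfl⟩
      exact ⟨f x, ⟨x, hx, rfl⟩, rfl⟩
  rw [IsWeaklyCompact, him]
  exact hL.image hc

end Aux

/-! ### Convex block combinations -/

def BlockComb {E : Type*} [AddCommGroup E] [Module ℝ E] (x : ℕ → E) (N : ℕ) : Set E :=
  {v | ∃ (I : Finset ℕ) (a : ℕ → ℝ), I.Nonempty ∧ (∀ n ∈ I, N ≤ n) ∧ (∀ n, 0 ≤ a n) ∧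
    (∑ n ∈ I, a n = 1) ∧ (∀ n ∉ I, a n = 0) ∧ v = ∑ n ∈ I, a n • x n}

theorem blockComb_mem {E : Type*} [AddCommGroup E] [Module ℝ E] (x : ℕ → E) (N n : ℕ)
    (hn : N ≤ n) : x n ∈ BlockComb x N := by
  refine ⟨{n}, fun m => if m = n then 1 else 0, Finset.singleton_nonempty n,
    by simpa using hn, fun m => by dsimp only; split <;> norm_num, by simp, fun m hm => by
      simp only [Finset.mem_singleton] at hm; simp [hm], by simp⟩

theorem blockComb_convex {E : Type*} [AddCommGroup E] [Module ℝ E] (x : ℕ → E) (N : ℕ) :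
    Convex ℝ (BlockComb x N) := by
  rintro v ⟨I, a, hIne, hIN, ha0, ha1, haz, rfl⟩ w ⟨J, b, hJne, hJN, hb0, hb1, hbz, rfl⟩
    t s ht hs hts
  refine ⟨I ∪ J, fun n => t * a n + s * b n, hIne.mono Finset.subset_union_left,
    fun n hn => ?_, fun n => add_nonneg (mul_nonneg ht (ha0 n)) (mul_nonneg hs (hb0 n)),
    ?_, fun n hn => ?_, ?_⟩
  · rcases Finset.mem_union.1 hn with h | h
    exacts [hIN n h, hJN n h]
  · have hA : ∑ n ∈ I ∪ J, a n = 1 := by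
      rw [← ha1]; exact (Finset.sum_subset Finset.subset_union_left (fun n _ hn => haz n hn)).symm
    have hB : ∑ n ∈ I ∪ J, b n = 1 := by
      rw [← hb1]; exact (Finset.sum_subset Finset.subset_union_right (fun n _ hn => hbz n hn)).symm
    simp [Finset.sum_add_distrib, ← Finset.mul_sum, hA, hB, hts]
  · simp only [Finset.mem_union, not_or] at hn
    dsimp only; rw [haz n hn.1, hbz n hn.2]; ring
  · have hA : ∑ n ∈ I ∪ J, a n • x n = ∑ n ∈ I, a n • x n :=
      (Finset.sum_subset Finset.subset_union_left (fun n _ hn => by rw [haz n hn, zero_smul])).symm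
    have hB : ∑ n ∈ I ∪ J, b n • x n = ∑ n ∈ J, b n • x n :=
      (Finset.sum_subset Finset.subset_union_right (fun n _ hn => by rw [hbz n hn, zero_smul])).symm
    calc t • ∑ n ∈ I, a n • x n + s • ∑ n ∈ J, b n • x n
        = t • ∑ n ∈ I ∪ J, a n • x n + s • ∑ n ∈ I ∪ J, b n • x n := by rw [hA, hB]
      _ = ∑ n ∈ I ∪ J, (t * a n + s * b n) • x n := by
          rw [Finset.smul_sum, Finset.smul_sum, ← Finset.sum_add_distrib]
          exact Finset.sum_congr rfl (fun n _ => by rw [smul_smul, smul_smul, add_smul])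

theorem exists_blockComb_small {E : Type*} [NormedAddCommGroup E] [NormedSpace ℝ E]
    (r : ℕ → E) (hr : ∀ φ : StrongDual ℝ E, Filter.Tendsto (fun n => φ (r n)) atTop (nhds 0))
    (N : ℕ) (ε : ℝ) (hε : 0 < ε) : ∃ v ∈ BlockComb r N, ‖v‖ < ε := by
  by_cases h0 : (0 : E) ∈ closure (BlockComb r N)
  · obtain ⟨v, hv, hd⟩ := Metric.mem_closure_iff.1 h0 ε hε
    exact ⟨v, hv, by simpa [dist_eq_norm] using hd⟩
  · obtain ⟨φ, c, hφ0, hφ⟩ := geometric_hahn_banach_point_closed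
      ((blockComb_convex r N).closure) isClosed_closure h0
    have hc : 0 < c := by simpa using hφ0
    have hev : ∀ᶠ n in atTop, φ (r n) < c := (hr φ).eventually_lt_const hc
    obtain ⟨n, hn1, hn2⟩ := (hev.and (eventually_ge_atTop N)).exists
    exact absurd hn1 (not_lt.2 (hφ _ (subset_closure (blockComb_mem r N n hn2))).le)

/-! ### Block ordering facts -/

theorem block_lt {I : ℕ → Finset ℕ} (hne : ∀ k, (I k).Nonempty)
    (hord : ∀ k m m', m ∈ I k → m' ∈ I (k + 1) → m < m') :
    ∀ {k l : ℕ}, k < l → ∀ m ∈ I k, ∀ m' ∈ I l, m < m' := by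
  intro k l hkl
  induction l with
  | zero => omega
  | succ l ih =>
    intro m hm m' hm'
    rcases Nat.lt_succ_iff_lt_or_eq.1 hkl with h | rfl
    · obtain ⟨p, hp⟩ := hne l
      exact (ih h m hm p hp).trans (hord l p m' hp hm')
    · exact hord k m m' hm hm'

theorem block_ge {I : ℕ → Finset ℕ} (hne : ∀ k, (I k).Nonempty)
    (hord : ∀ k m m', m ∈ I k → m' ∈ I (k + 1) → m < m') :
    ∀ k, ∀ m ∈ I k, k ≤ m := by
  intro k
  induction k with
  | zero => intro m _; exact Nat.zero_le m
  | succ k ih =>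
    intro m hm
    obtain ⟨p, hp⟩ := hne k
    exact Nat.succ_le_of_lt (lt_of_le_of_lt (ih p hp) (hord k p m hp hm))

theorem block_disjoint {I : ℕ → Finset ℕ} (hne : ∀ k, (I k).Nonempty)
    (hord : ∀ k m m', m ∈ I k → m' ∈ I (k + 1) → m < m') :
    ∀ {k l : ℕ}, k ≠ l → Disjoint (I k) (I l) := by
  intro k l hkl
  rw [Finset.disjoint_left]
  intro m hmk hml
  rcases hkl.lt_or_gt with h | h
  · exact lt_irrefl m (block_lt hne hord h m hmk m hml)
  · exact lt_irrefl m (block_lt hne hord h m hml m hmk)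

theorem isConvexBlock_trans {E : Type*} [AddCommGroup E] [Module ℝ E] {x y z : ℕ → E}
    (hxy : IsConvexBlock x y) (hyz : IsConvexBlock y z) : IsConvexBlock x z := by
  obtain ⟨I, a, hIne, hIord, ha0, ha1, hay⟩ := hxy
  obtain ⟨J, b, hJne, hJord, hb0, hb1, hbz⟩ := hyz
  classical
  refine ⟨fun k => (J k).biUnion I,
    fun n => if h : ∃ j, n ∈ I j then a n * b h.choose else 0, ?_, ?_, ?_, ?_, ?_⟩
  · intro k
    obtain ⟨j, hj⟩ := hJne k
    obtain ⟨m, hm⟩ := hIne j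
    exact ⟨m, Finset.mem_biUnion.2 ⟨j, hj, hm⟩⟩
  · intro k m m' hm hm'
    obtain ⟨j, hj, hmj⟩ := Finset.mem_biUnion.1 hm
    obtain ⟨j', hj', hmj'⟩ := Finset.mem_biUnion.1 hm'
    exact block_lt hIne hIord (hJord k j j' hj hj') m hmj m' hmj'
  · intro n
    dsimp only
    split
    · exact mul_nonneg (ha0 n) (hb0 _)
    · exact le_refl 0
  all_goals
  · intro k
    have key : ∀ j ∈ J k, ∀ n ∈ I j,
        (if h : ∃ j, n ∈ I j then a n * b h.choose else 0) = a n * b j := by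
      intro j hj n hn
      have hex : ∃ j, n ∈ I j := ⟨j, hn⟩
      rw [dif_pos hex]
      congr 1
      by_contra hne'
      have := block_disjoint hIne hIord (fun h => hne' (congrArg b h)) |>.le_bot
        (Finset.mem_inter.2 ⟨hex.choose_spec, hn⟩ : n ∈ I hex.choose ∩ I j)
      simp at this
    have hdisj : ∀ j ∈ J k, ∀ j' ∈ J k, j ≠ j' → Disjoint (I j) (I j') :=
      fun j _ j' _ hjj' => block_disjoint hIne hIord hjj'
    first
    | · rw [Finset.sum_biUnion hdisj]
        calc ∑ j ∈ J k, ∑ n ∈ I j, (if h : ∃ j, n ∈ I j then a n * b h.choose else 0)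
            = ∑ j ∈ J k, ∑ n ∈ I j, a n * b j :=
              Finset.sum_congr rfl fun j hj => Finset.sum_congr rfl fun n hn => key j hj n hn
          _ = ∑ j ∈ J k, b j * ∑ n ∈ I j, a n := by
              refine Finset.sum_congr rfl fun j hj => ?_
              rw [Finset.mul_sum]
              exact Finset.sum_congr rfl fun n _ => mul_comm _ _
          _ = 1 := by
              rw [← hb1 k]
              exact Finset.sum_congr rfl fun j hj => by rw [ha1 j, mul_one]
    | · rw [hbz k, Finset.sum_biUnion hdisj]
        refine Finset.sum_congr rfl fun j hj => ?_
        rw [hay j, Finset.smul_sum]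
        refine Finset.sum_congr rfl fun n hn => ?_
        dsimp only
        rw [key j hj n hn, smul_smul, mul_comm (a n) (b j)]

set_option maxHeartbeats 2000000 in
theorem propertyK_of_grothendieck_subspace (X : Type*) [NormedAddCommGroup X]
    [NormedSpace ℝ X] [CompleteSpace X] (Y : Submodule ℝ X)
    [IsClosed (Y : Set X)] (hY : GrothendieckSpace ↥Y)
    (hQ : PropertyK (X ⧸ Y)) : PropertyK X := by
  classical
  intro f g hfg
  -- restriction of `f n - g` to `Y`
  set r : ℕ → StrongDual ℝ ↥Y := fun n => (f n - g).comp Y.subtypeL with hr_def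
  have hrw : WStarTendsto r (0 : StrongDual ℝ ↥Y) := by
    intro y
    have h1 : Tendsto (fun n => f n (y : X) - g (y : X)) atTop (nhds (g (y : X) - g (y : X))) :=
      (hfg (y : X)).sub tendsto_const_nhds
    simpa [hr_def] using h1
  have hrnull : ∀ φ : StrongDual ℝ (StrongDual ℝ ↥Y), Tendsto (fun n => φ (r n)) atTop (nhds 0) := by
    intro φ
    have := hY r 0 hrw φ
    simpa using this
  -- choose small convex block combinations of `r`
  have pick : ∀ N k : ℕ, ∃ (I : Finset ℕ) (a : ℕ → ℝ), I.Nonempty ∧ (∀ n ∈ I, N ≤ n) ∧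
      (∀ n, 0 ≤ a n) ∧ (∑ n ∈ I, a n = 1) ∧ (∀ n ∉ I, a n = 0) ∧
      ‖∑ n ∈ I, a n • r n‖ < 1 / (k + 1) := by
    intro N k
    obtain ⟨v, ⟨I, a, h1, h2, h3, h4, h5, rfl⟩, hv⟩ :=
      exists_blockComb_small r hrnull N (1 / (k + 1)) (by positivity)
    exact ⟨I, a, h1, h2, h3, h4, h5, hv⟩
  choose pI pA hp1 hp2 hp3 hp4 hp5 hp6 using pick
  -- recursive block construction
  set Gf : ℕ → ℕ × Finset ℕ := fun k =>
    Nat.rec ((0 : ℕ), pI 0 0)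
      (fun k p => (p.2.sup id + 1, pI (p.2.sup id + 1) (k + 1))) k with hGf_def
  set Ifun : ℕ → Finset ℕ := fun k => (Gf k).2 with hIfun_def
  set Nfun : ℕ → ℕ := fun k => (Gf k).1 with hNfun_def
  have hIN : ∀ k, Ifun k = pI (Nfun k) k := by
    intro k
    cases k <;> rfl
  have hNsucc : ∀ k, Nfun (k + 1) = (Ifun k).sup id + 1 := fun k => rfl
  have hne : ∀ k, (Ifun k).Nonempty := fun k => by rw [hIN k]; exact hp1 _ _
  have hord : ∀ k m m', m ∈ Ifun k → m' ∈ Ifun (k + 1) → m < m' := by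
    intro k m m' hm hm'
    have h1 : Nfun (k + 1) ≤ m' := by
      have := hp2 (Nfun (k + 1)) (k + 1)
      rw [← hIN (k + 1)] at this
      exact this m' hm'
    have h2 : m ≤ (Ifun k).sup id := Finset.le_sup (f := id) hm
    rw [hNsucc] at h1
    omega
  -- the global coefficient function
  set a : ℕ → ℝ := fun n => if h : ∃ k, n ∈ Ifun k then pA (Nfun h.choose) h.choose n else 0
    with ha_def
  have ha_eq : ∀ k, ∀ n ∈ Ifun k, a n = pA (Nfun k) k n := by
    intro k n hn
    have hex : ∃ k, n ∈ Ifun k := ⟨k, hn⟩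
    have hck : hex.choose = k := by
      by_contra hne'
      have := (block_disjoint hne hord hne').le_bot
        (Finset.mem_inter.2 ⟨hex.choose_spec, hn⟩ : n ∈ Ifun hex.choose ∩ Ifun k)
      simp at this
    rw [ha_def]
    dsimp only
    rw [dif_pos hex, hck]
  have ha0 : ∀ n, 0 ≤ a n := by
    intro n
    rw [ha_def]
    dsimp only
    split
    · exact hp3 _ _ n
    · exact le_refl 0
  have hsum1 : ∀ k, ∑ n ∈ Ifun k, a n = 1 := by
    intro k
    rw [Finset.sum_congr rfl (ha_eq k)]
    rw [hIN k]
    exact hp4 _ _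
  -- first-stage convex block of `f`
  set f1 : ℕ → StrongDual ℝ X := fun k => ∑ n ∈ Ifun k, a n • f n with hf1_def
  have hblock1 : IsConvexBlock f f1 := ⟨Ifun, a, hne, hord, ha0, hsum1, fun k => rfl⟩
  -- small restriction norms
  have hres : ∀ k, ‖(f1 k - g).comp Y.subtypeL‖ < 1 / (k + 1) := by
    intro k
    have heq : (f1 k - g).comp Y.subtypeL = ∑ n ∈ Ifun k, a n • r n := by
      ext y
      simp only [ContinuousLinearMap.comp_apply, ContinuousLinearMap.sub_apply,
        ContinuousLinearMap.coe_sum', Finset.sum_apply, ContinuousLinearMap.coe_smul',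
        Pi.smul_apply, smul_eq_mul, hf1_def, hr_def, Submodule.coe_subtypeL',
        Submodule.coe_subtype]
      simp only [mul_sub]
      rw [Finset.sum_sub_distrib, ← Finset.sum_mul, hsum1 k, one_mul]
    rw [heq]
    have := hp6 (Nfun k) k
    rw [← hIN k] at this
    calc ‖∑ n ∈ Ifun k, a n • r n‖ = ‖∑ n ∈ Ifun k, pA (Nfun k) k n • r n‖ := by
          congr 1
          exact Finset.sum_congr rfl fun n hn => by rw [ha_eq k n hn]
      _ < 1 / (k + 1) := this
  -- pointwise convergence of `f1` to `g`
  have hf1pt : ∀ x : X, Tendsto (fun k => f1 k x) atTop (nhds (g x)) := by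
    intro x
    rw [Metric.tendsto_atTop]
    intro ε hε
    obtain ⟨N, hN⟩ := Metric.tendsto_atTop.1 (hfg x) (ε / 2) (by positivity)
    refine ⟨N, fun k hk => ?_⟩
    have hdiff : f1 k x - g x = ∑ n ∈ Ifun k, a n * (f n x - g x) := by
      simp only [hf1_def, ContinuousLinearMap.coe_sum', Finset.sum_apply,
        ContinuousLinearMap.coe_smul', Pi.smul_apply, smul_eq_mul]
      simp only [mul_sub]
      rw [Finset.sum_sub_distrib, ← Finset.sum_mul, hsum1 k, one_mul]
    rw [Real.dist_eq, hdiff]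
    calc |∑ n ∈ Ifun k, a n * (f n x - g x)| ≤ ∑ n ∈ Ifun k, |a n * (f n x - g x)| :=
          Finset.abs_sum_le_sum_abs _ _
      _ ≤ ∑ n ∈ Ifun k, a n * (ε / 2) := by
          refine Finset.sum_le_sum fun n hn => ?_
          rw [abs_mul, abs_of_nonneg (ha0 n)]
          refine mul_le_mul_of_nonneg_left ?_ (ha0 n)
          have hnk : k ≤ n := block_ge hne hord k n hn
          have := hN n (le_trans hk hnk)
          rw [Real.dist_eq] at this
          exact this.le
      _ = ε / 2 := by rw [← Finset.sum_mul, hsum1 k, one_mul]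
      _ < ε := by linarith
  -- Hahn–Banach extensions of restrictions
  choose Gex hGex hGexnorm using fun k =>
    exists_extension_norm_eq Y ((f1 k - g).comp Y.subtypeL)
  have hGexsmall : ∀ k, ‖Gex k‖ < 1 / (k + 1) := fun k => (hGexnorm k) ▸ hres k
  -- the quotient functionals
  set e : ℕ → StrongDual ℝ X := fun k => f1 k - g - Gex k with he_def
  have hker : ∀ k, Y ≤ LinearMap.ker ((e k : StrongDual ℝ X) : X →ₗ[ℝ] ℝ) := by
    intro k y hy
    have h1 := hGex k ⟨y, hy⟩
    simp only [ContinuousLinearMap.comp_apply, Submodule.coe_subtypeL',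
      Submodule.coe_subtype] at h1
    have h2 : (f1 k - g) (⟨y, hy⟩ : ↥Y) = f1 k y - g y := rfl
    rw [h2] at h1
    simp only [LinearMap.mem_ker, ContinuousLinearMap.coe_coe, he_def,
      ContinuousLinearMap.sub_apply]
    rw [h1]
    ring
  set E : ℕ → StrongDual ℝ (X ⧸ Y) := fun k => liftD Y (e k) (hker k) with hE_def
  have hEmk : ∀ k (x : X), E k (Submodule.Quotient.mk x) = f1 k x - g x - Gex k x :=
    fun k x => rfl
  -- `E` is weak*-null
  have hEnull : WStarTendsto E (0 : StrongDual ℝ (X ⧸ Y)) := by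
    intro z
    obtain ⟨x, rfl⟩ := Submodule.Quotient.mk_surjective Y z
    have h1 : Tendsto (fun k => f1 k x - g x) atTop (nhds (g x - g x)) :=
      (hf1pt x).sub tendsto_const_nhds
    rw [sub_self] at h1
    have h2 : Tendsto (fun k => Gex k x) atTop (nhds 0) := by
      have hb : ∀ k : ℕ, ‖Gex k x‖ ≤ (1 / (k + 1) : ℝ) * ‖x‖ := fun k =>
        le_trans ((Gex k).le_opNorm x)
          (mul_le_mul_of_nonneg_right (hGexsmall k).le (norm_nonneg x))
      have h3 : Tendsto (fun k : ℕ => (1 / (k + 1) : ℝ) * ‖x‖) atTop (nhds (0 * ‖x‖)) :=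
        (tendsto_one_div_add_atTop_nhds_zero_nat).mul_const ‖x‖
      rw [zero_mul] at h3
      exact squeeze_zero_norm hb h3
    have := h1.sub h2
    rw [sub_zero] at this
    simpa [hEmk] using this
  -- apply property (K) of the quotient
  obtain ⟨E', H, ⟨J, b, hJne, hJord, hb0, hb1, hbE⟩, hMack⟩ := hQ E 0 hEnull
  -- second-stage blocks of `f1`
  set y2 : ℕ → StrongDual ℝ X := fun k => ∑ j ∈ J k, b j • f1 j with hy2_def
  have hblock2 : IsConvexBlock f1 y2 := ⟨J, b, hJne, hJord, hb0, hb1, fun k => rfl⟩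
  set G2 : ℕ → StrongDual ℝ X := fun k => ∑ j ∈ J k, b j • Gex j with hG2_def
  -- decomposition
  have hdecomp : ∀ k (x : X), y2 k x = g x + G2 k x + E' k (Submodule.Quotient.mk x) := by
    intro k x
    have hEx : ∀ j, f1 j x = g x + Gex j x + E j (Submodule.Quotient.mk x) := by
      intro j
      rw [hEmk]
      ring
    have hE'x : E' k (Submodule.Quotient.mk x) =
        ∑ j ∈ J k, b j * E j (Submodule.Quotient.mk x) := by
      rw [hbE k]
      simp [ContinuousLinearMap.coe_sum', Finset.sum_apply]
    simp only [hy2_def, hG2_def, ContinuousLinearMap.coe_sum', Finset.sum_apply,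
      ContinuousLinearMap.coe_smul', Pi.smul_apply, smul_eq_mul]
    rw [hE'x]
    rw [Finset.sum_congr rfl (fun j _ => by rw [hEx j])]
    simp only [mul_add, Finset.sum_add_distrib, ← Finset.sum_mul, hb1 k, one_mul]
  -- norm estimate on G2
  have hG2small : ∀ k, ‖G2 k‖ ≤ 1 / (k + 1) := by
    intro k
    calc ‖G2 k‖ ≤ ∑ j ∈ J k, ‖b j • Gex j‖ := norm_sum_le _ _
      _ ≤ ∑ j ∈ J k, b j * (1 / (k + 1)) := by
          refine Finset.sum_le_sum fun j hj => ?_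
          refine le_trans (_root_.norm_smul_le (b j) (Gex j)) ?_
          rw [Real.norm_eq_abs, abs_of_nonneg (hb0 j)]
          refine mul_le_mul_of_nonneg_left ?_ (hb0 j)
          refine le_trans (hGexsmall j).le ?_
          have hjk : k ≤ j := block_ge hJne hJord k j hj
          have h1 : (k : ℝ) + 1 ≤ (j : ℝ) + 1 := by exact_mod_cast Nat.add_le_add_right hjk 1
          exact one_div_le_one_div_of_le (by positivity) h1
      _ = 1 / (k + 1) := by rw [← Finset.sum_mul, hb1 k, one_mul]
  -- the limit functional
  refine ⟨y2, g + H.comp (qC Y), isConvexBlock_trans hblock1 hblock2, ?_⟩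
  intro L hL ε hε
  obtain ⟨M, hM⟩ := isWeaklyCompact_bounded hL
  set M1 : ℝ := max M 0 + 1 with hM1_def
  have hM1pos : 0 < M1 := by positivity
  have hM1 : ∀ x ∈ L, ‖x‖ ≤ M1 := fun x hx =>
    le_trans (hM x hx) (by simp only [hM1_def]; nlinarith [le_max_left M 0])
  have hev1 : ∀ᶠ k in atTop, ‖G2 k‖ * M1 < ε / 2 := by
    have h3 : Tendsto (fun k : ℕ => (1 / (k + 1) : ℝ) * M1) atTop (nhds (0 * M1)) :=
      (tendsto_one_div_add_atTop_nhds_zero_nat).mul_const M1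
    rw [zero_mul] at h3
    filter_upwards [h3.eventually_lt_const (by positivity : (0:ℝ) < ε / 2)] with k hk
    exact lt_of_le_of_lt (mul_le_mul_of_nonneg_right (hG2small k) hM1pos.le) hk
  have hev2 : ∀ᶠ k in atTop, ∀ z ∈ (qC Y) '' L, |E' k z - H z| < ε / 2 :=
    hMack ((qC Y) '' L) (isWeaklyCompact_image (qC Y) hL) (ε / 2) (by positivity)
  filter_upwards [hev1, hev2] with k hk1 hk2
  intro x hx
  have hzmem : (qC Y) x ∈ (qC Y) '' L := Set.mem_image_of_mem _ hx
  have h2 := hk2 _ hzmem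
  have hqx : (qC Y) x = Submodule.Quotient.mk x := rfl
  have hval : y2 k x - (g + H.comp (qC Y)) x =
      G2 k x + (E' k (Submodule.Quotient.mk x) - H (Submodule.Quotient.mk x)) := by
    rw [hdecomp k x]
    simp only [ContinuousLinearMap.add_apply, ContinuousLinearMap.comp_apply, hqx]
    ring
  rw [hval]
  calc |G2 k x + (E' k (Submodule.Quotient.mk x) - H (Submodule.Quotient.mk x))|
      ≤ |G2 k x| + |E' k (Submodule.Quotient.mk x) - H (Submodule.Quotient.mk x)| :=
        abs_add_le _ _
    _ < ε / 2 + ε / 2 := by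
        refine add_lt_add_of_le_of_lt ?_ (by rw [← hqx]; exact h2)
        calc |G2 k x| ≤ ‖G2 k‖ * ‖x‖ := (G2 k).le_opNorm x
          _ ≤ ‖G2 k‖ * M1 := mul_le_mul_of_nonneg_left (hM1 x hx) (norm_nonneg _)
          _ ≤ ε / 2 := hk1.le
    _ = ε := by ring
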